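/- Let k be a symmetric positive-semidefinite kernel on ℝ^d that is Lipschitz with constant L_k > 0, let x^(1),…,x^(N) be training inputs and σ_n² > 0 a noise variance. Then for every x ∈ ℝ^d and every ρ with 0 < ρ ≤ k(x,x)/L_k such that at least one training input lies within distance ρ of x, the posterior variance satisfies σ_N²(x) ≤ 4 L_k ρ + σ_n² / |B_ρ(x)|, where |B_ρ(x)| is the number of training inputs within Euclidean distance ρ of x. -/

import Mathlib

open Matrix

private lemma gp_quad_lower {N : ℕ} (A : Matrix (Fin N) (Fin N) ℝ) (hA : A.PosDef)
    (kv v : Fin N → ℝ) :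
    2 * (v ⬝ᵥ kv) - v ⬝ᵥ (A *ᵥ v) ≤ kv ⬝ᵥ (A⁻¹ *ᵥ kv) := by
  have hdet : IsUnit A.det := hA.det_pos.ne'.isUnit
  set u : Fin N → ℝ := A⁻¹ *ᵥ kv with hu
  have hAu : A *ᵥ u = kv := by
    rw [hu, Matrix.mulVec_mulVec, Matrix.mul_nonsing_inv _ hdet, Matrix.one_mulVec]
  have hAt : Aᵀ = A := hA.isHermitian
  have hsymA : ∀ a b : Fin N → ℝ, a ⬝ᵥ A *ᵥ b = b ⬝ᵥ A *ᵥ a := by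
    intro a b
    rw [Matrix.dotProduct_mulVec, ← Matrix.mulVec_transpose, hAt, dotProduct_comm]
  have h0 : 0 ≤ (v - u) ⬝ᵥ (A *ᵥ (v - u)) := by
    have := hA.posSemidef.dotProduct_mulVec_nonneg (v - u)
    simpa using this
  rw [Matrix.mulVec_sub, sub_dotProduct, dotProduct_sub,
    dotProduct_sub, hAu] at h0
  have h1 : u ⬝ᵥ A *ᵥ v = v ⬝ᵥ kv := by rw [hsymA, hAu, dotProduct_comm]
  have h2 : u ⬝ᵥ kv = kv ⬝ᵥ (A⁻¹ *ᵥ kv) := by rw [dotProduct_comm, hu]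
  linarith

/-- Simplified posterior variance bound: σ_N²(x) ≤ 4 L_k ρ + σ_n²/|B_ρ(x)|. -/
theorem gp_posterior_variance_bound_simplified
    (d N : ℕ) (hN : 1 ≤ N)
    (X : Fin N → EuclideanSpace ℝ (Fin d))
    (σn2 : ℝ) (hσ : 0 < σn2)
    (k : EuclideanSpace ℝ (Fin d) → EuclideanSpace ℝ (Fin d) → ℝ)
    (hsymm : ∀ x y, k x y = k y x)
    (hpsd : ∀ (m : ℕ) (z : Fin m → EuclideanSpace ℝ (Fin d)),
      (Matrix.of fun i j => k (z i) (z j)).PosSemidef)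
    (Lk : ℝ) (hLk : 0 < Lk)
    (hlip : ∀ x y z, |k x z - k y z| ≤ Lk * ‖x - y‖)
    (x : EuclideanSpace ℝ (Fin d)) (ρ : ℝ)
    (hρ0 : 0 < ρ) (hρ : ρ ≤ k x x / Lk)
    (hB : ∃ i, ‖X i - x‖ ≤ ρ) :
    letI K : Matrix (Fin N) (Fin N) ℝ := Matrix.of fun i j => k (X i) (X j)
    letI kN : Fin N → ℝ := fun i => k x (X i)
    letI σ2 : ℝ := k x x - kN ⬝ᵥ ((K + σn2 • (1 : Matrix (Fin N) (Fin N) ℝ))⁻¹ *ᵥ kN)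
    letI B : ℝ := (Finset.univ.filter fun i => ‖X i - x‖ ≤ ρ).card
    σ2 ≤ 4 * Lk * ρ + σn2 / B := by
  set kN : Fin N → ℝ := fun i => k x (X i) with hkN
  set K : Matrix (Fin N) (Fin N) ℝ := Matrix.of fun i j => k (X i) (X j) with hKdef
  -- the ball index set
  set S : Finset (Fin N) := Finset.univ.filter (fun i => ‖X i - x‖ ≤ ρ) with hS
  obtain ⟨i0, hi0⟩ := hB
  have hSne : S.Nonempty := ⟨i0, by simp [hS, hi0]⟩
  have hcard : 0 < S.card := Finset.card_pos.mpr hSne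
  have hcardR : (0 : ℝ) < (S.card : ℝ) := by exact_mod_cast hcard
  set c : ℝ := ((S.card : ℝ))⁻¹ with hc
  have hc0 : 0 ≤ c := inv_nonneg.mpr hcardR.le
  have hcB : c * (S.card : ℝ) = 1 := inv_mul_cancel₀ hcardR.ne'
  -- the test vector
  set v : Fin N → ℝ := fun i => if ‖X i - x‖ ≤ ρ then c else 0 with hv
  -- positive definiteness of A
  set A : Matrix (Fin N) (Fin N) ℝ := K + σn2 • (1 : Matrix (Fin N) (Fin N) ℝ) with hA
  have hK : K.PosSemidef := hpsd N X
  have hI : (σn2 • (1 : Matrix (Fin N) (Fin N) ℝ)).PosDef := by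
    rw [smul_one_eq_diagonal]
    exact posDef_diagonal_iff.mpr fun _ => hσ
  have hApd : A.PosDef := Matrix.PosDef.posSemidef_add hK hI
  -- key inequality from the quadratic form
  have hquad := gp_quad_lower A hApd kN v
  -- membership fact
  have hmem : ∀ i, i ∈ S ↔ ‖X i - x‖ ≤ ρ := by
    intro i; simp [hS]
  -- Lipschitz bounds
  have hlow : ∀ i ∈ S, k x x - Lk * ρ ≤ kN i := by
    intro i hi
    have hiρ : ‖X i - x‖ ≤ ρ := (hmem i).mp hi
    have h1 : |k (X i) x - k x x| ≤ Lk * ‖X i - x‖ := hlip (X i) x x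
    have h2 : Lk * ‖X i - x‖ ≤ Lk * ρ := by
      exact mul_le_mul_of_nonneg_left hiρ hLk.le
    have h3 : k x x - k (X i) x ≤ Lk * ρ := by
      have := abs_le.mp h1
      linarith [this.1]
    have : kN i = k (X i) x := hsymm x (X i)
    linarith
  have hupp : ∀ i ∈ S, ∀ j ∈ S, K i j ≤ k x x + 2 * (Lk * ρ) := by
    intro i hi j hj
    have hiρ : ‖X i - x‖ ≤ ρ := (hmem i).mp hi
    have hjρ : ‖X j - x‖ ≤ ρ := (hmem j).mp hj
    have h1 : |k (X i) (X j) - k x (X j)| ≤ Lk * ‖X i - x‖ := hlip (X i) x (X j)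
    have h2 : |k (X j) x - k x x| ≤ Lk * ‖X j - x‖ := hlip (X j) x x
    have h1' : k (X i) (X j) - k x (X j) ≤ Lk * ρ := by
      have := (abs_le.mp h1).2
      have h2' : Lk * ‖X i - x‖ ≤ Lk * ρ := mul_le_mul_of_nonneg_left hiρ hLk.le
      linarith
    have h2'' : k (X j) x - k x x ≤ Lk * ρ := by
      have := (abs_le.mp h2).2
      have h3' : Lk * ‖X j - x‖ ≤ Lk * ρ := mul_le_mul_of_nonneg_left hjρ hLk.le
      linarith
    have hKij : K i j = k (X i) (X j) := rfl
    have hswap : k x (X j) = k (X j) x := hsymm x (X j)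
    linarith
  -- compute v ⬝ᵥ kN
  have hvk : k x x - Lk * ρ ≤ v ⬝ᵥ kN := by
    have heq : v ⬝ᵥ kN = c * ∑ i ∈ S, kN i := by
      rw [dotProduct]
      rw [hS, Finset.mul_sum, Finset.sum_filter]
      congr 1; ext i
      by_cases h : ‖X i - x‖ ≤ ρ <;> simp [hv, h]
    rw [heq]
    have hsum : (S.card : ℝ) * (k x x - Lk * ρ) ≤ ∑ i ∈ S, kN i := by
      have := Finset.sum_le_sum hlow
      simpa only [Finset.sum_const, nsmul_eq_mul] using this
    calc k x x - Lk * ρ = c * ((S.card : ℝ) * (k x x - Lk * ρ)) := by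
          rw [← mul_assoc, hcB, one_mul]
      _ ≤ c * ∑ i ∈ S, kN i := mul_le_mul_of_nonneg_left hsum hc0
  -- compute v ⬝ᵥ v
  have hvv : v ⬝ᵥ v = c := by
    rw [dotProduct]
    have : ∀ i, v i * v i = if ‖X i - x‖ ≤ ρ then c * c else 0 := by
      intro i; by_cases h : ‖X i - x‖ ≤ ρ <;> simp [hv, h]
    rw [Finset.sum_congr rfl fun i _ => this i, ← Finset.sum_filter, ← hS,
      Finset.sum_const, nsmul_eq_mul]
    have h : (S.card : ℝ) * (c * c) = (c * (S.card : ℝ)) * c := by ring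
    rw [h, hcB, one_mul]
  -- compute v ⬝ᵥ K *ᵥ v
  have hvKv : v ⬝ᵥ (K *ᵥ v) ≤ k x x + 2 * (Lk * ρ) := by
    have heq : v ⬝ᵥ (K *ᵥ v) = ∑ i ∈ S, ∑ j ∈ S, c * (K i j * c) := by
      rw [dotProduct]
      simp only [Matrix.mulVec, dotProduct]
      rw [hS, Finset.sum_filter]
      congr 1; ext i
      by_cases h : ‖X i - x‖ ≤ ρ
      · simp only [hv, h, if_true]
        rw [Finset.mul_sum, Finset.sum_filter]
        congr 1; ext j
        by_cases h' : ‖X j - x‖ ≤ ρ <;> simp [h']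
      · simp [hv, h]
    rw [heq]
    have hterm : ∀ i ∈ S, ∑ j ∈ S, c * (K i j * c) ≤ (S.card : ℝ) * (c * ((k x x + 2 * (Lk * ρ)) * c)) := by
      intro i hi
      have : ∑ j ∈ S, c * (K i j * c) ≤ ∑ j ∈ S, c * ((k x x + 2 * (Lk * ρ)) * c) := by
        refine Finset.sum_le_sum fun j hj => ?_
        have := hupp i hi j hj
        have h1 : K i j * c ≤ (k x x + 2 * (Lk * ρ)) * c := mul_le_mul_of_nonneg_right this hc0
        exact mul_le_mul_of_nonneg_left h1 hc0
      simpa [Finset.sum_const, nsmul_eq_mul] using this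
    have := Finset.sum_le_sum hterm
    have hfin : ∑ i ∈ S, (S.card : ℝ) * (c * ((k x x + 2 * (Lk * ρ)) * c))
        = k x x + 2 * (Lk * ρ) := by
      rw [Finset.sum_const, nsmul_eq_mul]
      have : (S.card : ℝ) * ((S.card : ℝ) * (c * ((k x x + 2 * (Lk * ρ)) * c)))
          = ((S.card : ℝ) * c) * ((S.card : ℝ) * c) * (k x x + 2 * (Lk * ρ)) := by ring
      rw [this, mul_comm (S.card : ℝ) c, hcB]; ring
    linarith
  -- split A
  have hAv : v ⬝ᵥ (A *ᵥ v) = v ⬝ᵥ (K *ᵥ v) + σn2 * (v ⬝ᵥ v) := by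
    rw [hA, Matrix.add_mulVec, dotProduct_add]
    congr 1
    rw [Matrix.smul_mulVec, Matrix.one_mulVec, dotProduct_smul,
      smul_eq_mul]
  have hAvle : v ⬝ᵥ (A *ᵥ v) ≤ k x x + 2 * (Lk * ρ) + σn2 * c := by
    rw [hAv, hvv]; linarith
  have hgoal : k x x - kN ⬝ᵥ (A⁻¹ *ᵥ kN) ≤ 4 * Lk * ρ + σn2 * c := by linarith
  rw [div_eq_mul_inv, ← hc]
  exact hgoal
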